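/- For every integer m ≥ 1 there exists c_0 > 0 such that for all c ≥ c_0 the following hold, where S = {z ∈ ℂ : Re z = c and (2m−1)π ≤ Im z ≤ (2m+1)π}: (i) every z ∈ S satisfies |f(z) − exp(z)| ≤ (p−1)·exp((2m+1)π·sin(2π/p))·exp(c·cos(2π/p)), and consequently ||f(z)| − e^c| ≤ (p−1)·exp((2m+1)π·sin(2π/p))·exp(c·cos(2π/p)); and (ii) there exist z_+, z_− ∈ S such that f(z_+) is purely imaginary with Im f(z_+) > 0 and f(z_−) is purely imaginary with Im f(z_−) < 0. -/

import Mathlib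

open Complex Filter Set

/-- The function `f(z) = ∑_{k=0}^{p-1} exp(ω^k z)` with `ω = exp(2πi/p)`. -/
noncomputable def f (p : ℕ) (z : ℂ) : ℂ :=
  ∑ k ∈ Finset.range p, Complex.exp (Complex.exp (2 * Real.pi * Complex.I / p) ^ k * z)

noncomputable def th (p k : ℕ) : ℝ := 2 * Real.pi * k / p

lemma omega_pow (p k : ℕ) :
    Complex.exp (2 * Real.pi * Complex.I / p) ^ k
      = Complex.exp ((th p k : ℝ) * Complex.I) := by
  rw [← Complex.exp_nat_mul]
  congr 1
  simp only [th]
  push_cast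
  ring

lemma abs_term (p k : ℕ) (z : ℂ) :
    ‖Complex.exp (Complex.exp (2 * Real.pi * Complex.I / p) ^ k * z)‖
      = Real.exp (Real.cos (th p k) * z.re - Real.sin (th p k) * z.im) := by
  rw [omega_pow, Complex.norm_exp]
  congr 1
  rw [Complex.mul_re, Complex.exp_ofReal_mul_I_re, Complex.exp_ofReal_mul_I_im]

lemma cos_th_le {p k : ℕ} (hp : 3 ≤ p) (hk1 : 1 ≤ k) (hk2 : k < p) :
    Real.cos (th p k) ≤ Real.cos (2 * Real.pi / p) := by
  have hπ := Real.pi_pos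
  have hp0 : (0:ℝ) < p := by
    have : (3:ℝ) ≤ p := by exact_mod_cast hp
    linarith
  have hk1' : (1:ℝ) ≤ (k:ℝ) := by exact_mod_cast hk1
  have hk2' : (k:ℝ) ≤ (p:ℝ) - 1 := by
    have : (k:ℝ) + 1 ≤ p := by exact_mod_cast hk2
    linarith
  have h1 : 2 * Real.pi / p ≤ th p k := by
    rw [th]
    exact (div_le_div_iff_of_pos_right hp0).mpr (by nlinarith)
  have h2 : th p k ≤ 2 * Real.pi - 2 * Real.pi / p := by
    rw [th, div_le_iff₀ hp0]
    have hcancel : 2 * Real.pi / p * p = 2 * Real.pi :=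
      div_mul_cancel₀ _ (ne_of_gt hp0)
    nlinarith
  have hx0 : (0:ℝ) ≤ 2 * Real.pi / p := by positivity
  rcases le_or_gt (th p k) Real.pi with h | h
  · exact Real.cos_le_cos_of_nonneg_of_le_pi hx0 h h1
  · rw [← Real.cos_two_pi_sub]
    exact Real.cos_le_cos_of_nonneg_of_le_pi hx0 (by linarith) (by linarith)

lemma continuous_f (p : ℕ) : Continuous (f p) := by
  unfold f
  exact continuous_finset_sum _ fun k _ =>
    Complex.continuous_exp.comp (continuous_const.mul continuous_id)

set_option maxHeartbeats 1000000 in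
theorem image_of_vertical_segment (p : ℕ) (hp : 3 ≤ p) (m : ℕ) (hm : 1 ≤ m) :
    ∃ c₀ : ℝ, 0 < c₀ ∧ ∀ c : ℝ, c₀ ≤ c →
      (∀ z : ℂ, z.re = c → (2 * (m : ℝ) - 1) * Real.pi ≤ z.im →
        z.im ≤ (2 * (m : ℝ) + 1) * Real.pi →
        ‖f p z - Complex.exp z‖ ≤
          ((p : ℝ) - 1) * Real.exp ((2 * (m : ℝ) + 1) * Real.pi * Real.sin (2 * Real.pi / p)) *
            Real.exp (c * Real.cos (2 * Real.pi / p)) ∧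
        |‖f p z‖ - Real.exp c| ≤
          ((p : ℝ) - 1) * Real.exp ((2 * (m : ℝ) + 1) * Real.pi * Real.sin (2 * Real.pi / p)) *
            Real.exp (c * Real.cos (2 * Real.pi / p))) ∧
      (∃ zp : ℂ, zp.re = c ∧ (2 * (m : ℝ) - 1) * Real.pi ≤ zp.im ∧
        zp.im ≤ (2 * (m : ℝ) + 1) * Real.pi ∧ (f p zp).re = 0 ∧ 0 < (f p zp).im) ∧
      (∃ zm : ℂ, zm.re = c ∧ (2 * (m : ℝ) - 1) * Real.pi ≤ zm.im ∧
        zm.im ≤ (2 * (m : ℝ) + 1) * Real.pi ∧ (f p zm).re = 0 ∧ (f p zm).im < 0) := by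
  have hπ := Real.pi_pos
  have hp3 : (3:ℝ) ≤ p := by exact_mod_cast hp
  have hp0 : (0:ℝ) < p := by linarith
  have hm1 : (1:ℝ) ≤ (m:ℝ) := by exact_mod_cast hm
  set q : ℝ := Real.cos (2 * Real.pi / p) with hqdef
  set s : ℝ := Real.sin (2 * Real.pi / p) with hsdef
  set M : ℝ := (2 * (m : ℝ) + 1) * Real.pi with hMdef
  have hM2π : 2 * Real.pi ≤ M := by rw [hMdef]; nlinarith
  have hMlow : M - 2 * Real.pi = (2 * (m : ℝ) - 1) * Real.pi := by rw [hMdef]; ring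
  have h2πp_pos : 0 < 2 * Real.pi / p := by positivity
  have h2πp_lt : 2 * Real.pi / p < Real.pi := by
    rw [div_lt_iff₀ hp0]; nlinarith
  have hs0 : 0 < s := Real.sin_pos_of_pos_of_lt_pi h2πp_pos h2πp_lt
  have hsc : s ^ 2 + q ^ 2 = 1 := Real.sin_sq_add_cos_sq _
  have hq1 : q < 1 := by nlinarith
  have hs1 : s ≤ 1 := Real.sin_le_one _
  -- ingredient A : per-term exponent bound, eventually in c
  have hA : ∀ᶠ c in atTop, ∀ k ∈ Finset.Ico 1 p, ∀ y : ℝ,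
      M - 2 * Real.pi ≤ y → y ≤ M →
      Real.cos (th p k) * c - Real.sin (th p k) * y ≤ c * q + M * s := by
    rw [eventually_all_finset]
    intro k hk
    obtain ⟨hk1, hk2⟩ := Finset.mem_Ico.mp hk
    have hcos : Real.cos (th p k) ≤ q := cos_th_le hp hk1 hk2
    rcases le_or_gt (-s) (Real.sin (th p k)) with hsin | hsin
    · filter_upwards [eventually_ge_atTop (0:ℝ)] with c hc y hy1 hy2
      have hy0 : 0 ≤ y := by linarith
      have e1 : Real.cos (th p k) * c ≤ q * c :=
        mul_le_mul_of_nonneg_right hcos hc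
      have e2 : -Real.sin (th p k) * y ≤ s * y :=
        mul_le_mul_of_nonneg_right (by linarith) hy0
      have e3 : s * y ≤ s * M := mul_le_mul_of_nonneg_left (by linarith) (le_of_lt hs0)
      nlinarith
    · have hlt : Real.cos (th p k) < q := by
        rcases lt_or_eq_of_le hcos with h | h
        · exact h
        · exfalso
          have h1 := Real.sin_sq_add_cos_sq (th p k)
          nlinarith
      have hδ : 0 < q - Real.cos (th p k) := by linarith
      have htend : Tendsto (fun c : ℝ => c * (q - Real.cos (th p k))) atTop atTop :=
        Tendsto.atTop_mul_const hδ tendsto_id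
      filter_upwards [htend.eventually_ge_atTop (M * (1 - s)),
        eventually_ge_atTop (0:ℝ)] with c hc hc0 y hy1 hy2
      have hy0 : 0 ≤ y := by linarith
      have hsin1 : -1 ≤ Real.sin (th p k) := Real.neg_one_le_sin _
      have e1 : -Real.sin (th p k) * y ≤ 1 * y :=
        mul_le_mul_of_nonneg_right (by linarith) hy0
      nlinarith
  -- ingredient B : smallness of the error bound
  have hB : ∀ᶠ c in atTop,
      ((p:ℝ) - 1) * Real.exp (M * s) * Real.exp (c * q) ≤ Real.exp c / 2 := by
    have h1 : Tendsto (fun c : ℝ => (q - 1) * c) atTop atBot :=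
      Tendsto.const_mul_atTop_of_neg (by linarith) tendsto_id
    have h2 : Tendsto (fun c : ℝ =>
        ((p:ℝ) - 1) * Real.exp (M * s) * Real.exp ((q - 1) * c)) atTop (nhds 0) := by
      have := (Real.tendsto_exp_atBot.comp h1).const_mul (((p:ℝ) - 1) * Real.exp (M * s))
      simpa using this
    filter_upwards [h2.eventually_lt_const (by norm_num : (0:ℝ) < 1/2)] with c hc
    have hc' := mul_le_mul_of_nonneg_right (le_of_lt hc) (le_of_lt (Real.exp_pos c))
    have hrw : ((p:ℝ) - 1) * Real.exp (M * s) * Real.exp (c * q)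
        = ((p:ℝ) - 1) * Real.exp (M * s) * Real.exp ((q - 1) * c) * Real.exp c := by
      rw [mul_assoc (((p:ℝ) - 1) * Real.exp (M * s)), ← Real.exp_add]
      congr 2
      ring
    rw [hrw]
    linarith
  obtain ⟨a, ha⟩ := eventually_atTop.mp (hA.and hB)
  refine ⟨max a 1, lt_of_lt_of_le one_pos (le_max_right a 1), ?_⟩
  intro c hc
  obtain ⟨hAc, hBc⟩ := ha c (le_trans (le_max_left a 1) hc)
  have hexp_pos : 0 < Real.exp c := Real.exp_pos c
  -- part (i) : key estimate
  have key : ∀ z : ℂ, z.re = c → (2 * (m : ℝ) - 1) * Real.pi ≤ z.im → z.im ≤ M →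
      ‖f p z - Complex.exp z‖
        ≤ ((p:ℝ) - 1) * Real.exp (M * s) * Real.exp (c * q) := by
    intro z hzre hzim1 hzim2
    have hsplit : f p z - Complex.exp z
        = ∑ k ∈ Finset.Ico 1 p,
            Complex.exp (Complex.exp (2 * Real.pi * Complex.I / p) ^ k * z) := by
      have hval : f p z = Complex.exp z + ∑ k ∈ Finset.Ico 1 p,
          Complex.exp (Complex.exp (2 * Real.pi * Complex.I / p) ^ k * z) := by
        rw [f, Finset.range_eq_Ico, Finset.sum_eq_sum_Ico_succ_bot (by omega : 0 < p)]
        norm_num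
      rw [hval]; ring
    rw [hsplit]
    calc ‖∑ k ∈ Finset.Ico 1 p,
            Complex.exp (Complex.exp (2 * Real.pi * Complex.I / p) ^ k * z)‖
        ≤ ∑ k ∈ Finset.Ico 1 p,
            ‖Complex.exp (Complex.exp (2 * Real.pi * Complex.I / p) ^ k * z)‖ :=
          norm_sum_le _ _
      _ ≤ ∑ _k ∈ Finset.Ico 1 p, Real.exp (c * q + M * s) := by
          apply Finset.sum_le_sum
          intro k hk
          rw [abs_term]
          apply Real.exp_le_exp.mpr
          rw [hzre]
          exact hAc k hk z.im (by linarith) hzim2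
      _ = ((p:ℝ) - 1) * Real.exp (M * s) * Real.exp (c * q) := by
          rw [Finset.sum_const, Nat.card_Ico, nsmul_eq_mul, Real.exp_add,
            Nat.cast_sub (by omega : 1 ≤ p)]
          push_cast
          ring
  have key2 : ∀ z : ℂ, z.re = c → (2 * (m : ℝ) - 1) * Real.pi ≤ z.im → z.im ≤ M →
      |‖f p z‖ - Real.exp c|
        ≤ ((p:ℝ) - 1) * Real.exp (M * s) * Real.exp (c * q) := by
    intro z hzre hzim1 hzim2
    have habs : ‖Complex.exp z‖ = Real.exp c := by rw [Complex.norm_exp, hzre]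
    calc |‖f p z‖ - Real.exp c|
        = |‖f p z‖ - ‖Complex.exp z‖| := by rw [habs]
      _ ≤ ‖f p z - Complex.exp z‖ :=
          abs_norm_sub_norm_le _ _
      _ ≤ _ := key z hzre hzim1 hzim2
  -- part (ii)
  set g : ℝ → ℝ := fun y => (f p ((c:ℂ) + y * Complex.I)).re with hgdef
  have hzc_re : ∀ y : ℝ, ((c:ℂ) + y * Complex.I).re = c := by intro y; simp
  have hzc_im : ∀ y : ℝ, ((c:ℂ) + y * Complex.I).im = y := by intro y; simp
  have hgcont : Continuous g := by
    apply Complex.continuous_re.comp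
    apply (continuous_f p).comp
    exact continuous_const.add (Complex.continuous_ofReal.mul continuous_const)
  have herr : ∀ y : ℝ, (2 * (m : ℝ) - 1) * Real.pi ≤ y → y ≤ M →
      |g y - Real.exp c * Real.cos y| ≤ Real.exp c / 2 ∧
      |(f p ((c:ℂ) + y * Complex.I)).im - Real.exp c * Real.sin y| ≤ Real.exp c / 2 := by
    intro y hy1 hy2
    have hk := key ((c:ℂ) + y * Complex.I) (hzc_re y)
      (by rw [hzc_im]; exact hy1) (by rw [hzc_im]; exact hy2)
    have hb := le_trans hk hBc
    have hsubre : (f p ((c:ℂ) + y * Complex.I) - Complex.exp ((c:ℂ) + y * Complex.I)).re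
        = g y - Real.exp c * Real.cos y := by
      rw [Complex.sub_re, Complex.exp_re, hzc_re, hzc_im]
    have hsubim : (f p ((c:ℂ) + y * Complex.I) - Complex.exp ((c:ℂ) + y * Complex.I)).im
        = (f p ((c:ℂ) + y * Complex.I)).im - Real.exp c * Real.sin y := by
      rw [Complex.sub_im, Complex.exp_im, hzc_re, hzc_im]
    constructor
    · rw [← hsubre]
      exact le_trans (Complex.abs_re_le_norm _) hb
    · rw [← hsubim]
      exact le_trans (Complex.abs_im_le_norm _) hb
  have hcos_a : Real.cos (2 * (m:ℝ) * Real.pi) = 1 := by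
    have h := Real.cos_nat_mul_two_pi m
    rw [show ((m:ℝ) * (2 * Real.pi)) = 2 * (m:ℝ) * Real.pi from by ring] at h
    exact h
  have hcos_b : Real.cos M = -1 := by
    rw [hMdef, show (2 * (m:ℝ) + 1) * Real.pi = 2 * (m:ℝ) * Real.pi + Real.pi from by ring,
      Real.cos_add_pi, hcos_a]
  have hcos_l : Real.cos ((2 * (m:ℝ) - 1) * Real.pi) = -1 := by
    rw [show (2 * (m:ℝ) - 1) * Real.pi = 2 * (m:ℝ) * Real.pi - Real.pi from by ring,
      Real.cos_sub_pi, hcos_a]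
  have hmid1 : (2 * (m:ℝ) - 1) * Real.pi ≤ 2 * (m:ℝ) * Real.pi := by nlinarith
  have hmid2 : 2 * (m:ℝ) * Real.pi ≤ M := by rw [hMdef]; nlinarith
  have hga : 0 < g (2 * (m:ℝ) * Real.pi) := by
    have h := (herr _ hmid1 hmid2).1
    rw [hcos_a] at h
    have h' := abs_le.mp h
    linarith [h'.1]
  have hgb : g M < 0 := by
    have h := (herr M (by linarith) le_rfl).1
    rw [hcos_b] at h
    have h' := abs_le.mp h
    linarith [h'.2]
  have hgl : g ((2 * (m:ℝ) - 1) * Real.pi) < 0 := by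
    have h := (herr _ le_rfl (by linarith)).1
    rw [hcos_l] at h
    have h' := abs_le.mp h
    linarith [h'.2]
  -- common analysis at a zero of g
  have hzero : ∀ y : ℝ, (2 * (m:ℝ) - 1) * Real.pi ≤ y → y ≤ M → g y = 0 →
      Real.cos y ≤ 1/2 ∧ -(1/2) ≤ Real.cos y := by
    intro y hy1 hy2 hgy
    have h := (herr y hy1 hy2).1
    rw [hgy] at h
    have h' := abs_le.mp h
    constructor
    · nlinarith [h'.1]
    · nlinarith [h'.2]
  refine ⟨fun z hz1 hz2 hz3 => ⟨key z hz1 hz2 hz3, key2 z hz1 hz2 hz3⟩, ?_, ?_⟩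
  · -- z_plus
    obtain ⟨yp, hyp, hgyp⟩ : ∃ y ∈ Set.Icc (2 * (m:ℝ) * Real.pi) M, g y = 0 := by
      have h := intermediate_value_Icc' hmid2 hgcont.continuousOn
      exact h ⟨le_of_lt hgb, le_of_lt hga⟩
    obtain ⟨hyp1, hyp2⟩ := hyp
    have hyl : (2 * (m:ℝ) - 1) * Real.pi ≤ yp := by linarith
    obtain ⟨hc1, hc2⟩ := hzero yp hyl hyp2 hgyp
    have hsin_eq : Real.sin (yp - (m:ℕ) * (2 * Real.pi)) = Real.sin yp :=
      Real.sin_periodic.sub_nat_mul_eq m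
    have hsin_nonneg : 0 ≤ Real.sin yp := by
      rw [← hsin_eq]
      apply Real.sin_nonneg_of_nonneg_of_le_pi
      · linarith
      · linarith [hMdef.le, hMdef.ge]
    have hsq := Real.sin_sq_add_cos_sq yp
    have hsin_big : 1/2 < Real.sin yp := by nlinarith
    have him := (herr yp hyl hyp2).2
    have him' := abs_le.mp him
    refine ⟨(c:ℂ) + yp * Complex.I, hzc_re yp, ?_, ?_, ?_, ?_⟩
    · rw [hzc_im]; exact hyl
    · rw [hzc_im]; exact hyp2
    · exact hgyp
    · nlinarith [him'.1]
  · -- z_minus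
    obtain ⟨ym, hym, hgym⟩ : ∃ y ∈ Set.Icc ((2 * (m:ℝ) - 1) * Real.pi) (2 * (m:ℝ) * Real.pi),
        g y = 0 := by
      have h := intermediate_value_Icc hmid1 hgcont.continuousOn
      exact h ⟨le_of_lt hgl, le_of_lt hga⟩
    obtain ⟨hym1, hym2⟩ := hym
    have hyu : ym ≤ M := by linarith
    obtain ⟨hc1, hc2⟩ := hzero ym hym1 hyu hgym
    have hsin_eq : Real.sin (ym - (m:ℕ) * (2 * Real.pi)) = Real.sin ym :=
      Real.sin_periodic.sub_nat_mul_eq m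
    have hsin_nonpos : Real.sin ym ≤ 0 := by
      rw [← hsin_eq]
      apply Real.sin_nonpos_of_nonpos_of_neg_pi_le
      · linarith
      · linarith
    have hsq := Real.sin_sq_add_cos_sq ym
    have hsin_big : Real.sin ym < -(1/2) := by nlinarith
    have him := (herr ym hym1 hyu).2
    have him' := abs_le.mp him
    refine ⟨(c:ℂ) + ym * Complex.I, hzc_re ym, ?_, ?_, ?_, ?_⟩
    · rw [hzc_im]; exact hym1
    · rw [hzc_im]; exact hyu
    · exact hgym
    · nlinarith [him'.2]
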